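/- If R is a commutative ring that is the direct limit of a directed system of commutative rings (R_i)_{i∈I}, then an ideal u of R is finitely generated if and only if there exist some index k ∈ I and a finitely generated ideal b of R_k such that u is the extension of b to R (i.e., u = bR under the structural map R_k → R). -/

import Mathlib

/-- An ideal of the direct limit of a directed system of commutative rings is finitely
generated iff it is the extension of a finitely generated ideal of some component. -/
theorem stmt0 {ι : Type*} [Preorder ι] [IsDirected ι (· ≤ ·)] [Nonempty ι]
    (G : ι → Type*) [∀ i, CommRing (G i)]
    (f : ∀ i j, i ≤ j → G i → G j) [DirectedSystem G fun i j h => f i j h]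
    (u : Ideal (Ring.DirectLimit G f)) :
    u.FG ↔ ∃ (k : ι) (b : Ideal (G k)), b.FG ∧
      u = Ideal.map (Ring.DirectLimit.of G f k) b := by
  classical
  constructor
  · rintro ⟨s, rfl⟩
    -- each element of s comes from some component
    have h : ∀ z : s, ∃ (i : ι) (x : G i), Ring.DirectLimit.of G f i x = z :=
      fun z => Ring.DirectLimit.exists_of z.1
    choose idx x hx using h
    obtain ⟨k, hk⟩ := Finset.exists_le (s.attach.image fun z => idx z)
    refine ⟨k, Ideal.span ((fun z : s => f (idx z) k (hk _ (Finset.mem_image_of_mem _ (s.mem_attach z))) (x z)) '' Set.univ), ⟨(s.attach.image fun z => f (idx z) k (hk _ (Finset.mem_image_of_mem _ (s.mem_attach z))) (x z)), by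
      simp [Finset.coe_image, Set.image_univ]⟩, ?_⟩
    rw [Ideal.map_span]
    congr 1
    rw [Set.image_univ, ← Set.range_comp]
    ext y
    classical
  constructor
    · rintro hy
      obtain ⟨z, hz⟩ : ∃ z : s, (z : Ring.DirectLimit G f) = y := ⟨⟨y, hy⟩, rfl⟩
      exact ⟨z, by simp [Function.comp, Ring.DirectLimit.of_f, hx, hz]⟩
    · rintro ⟨z, rfl⟩
      simp [Function.comp, Ring.DirectLimit.of_f, hx]
  · rintro ⟨k, b, hb, rfl⟩
    exact Ideal.FG.map hb _
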